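/- Let S ⊆ {1,…,d} be both irreducible and closed (i.e. ⌊S⌋ = S and ⌈S⌉ = S). Then every subset T ⊆ S is both irreducible and closed. -/
import Mathlib


/-- Vertex type: `some i` is the feature vertex `i`, `none` is the target vertex `Y`. -/
abbrev Vtx (d : ℕ) := Option (Fin d)

/-- `PathTo E j p` means `p` is a directed path in the graph with edge relation `E`
from the feature vertex `j` to the target vertex `Y` (encoded as `none`). -/
def PathTo {d : ℕ} (E : Vtx d → Vtx d → Prop) (j : Fin d) (p : List (Vtx d)) : Prop :=
  p.Chain' E ∧ p.head? = some (some j) ∧ p.getLast? = some none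

open Classical in
/-- The basis `⌊S⌋` of `S`: all `j ∈ S` having a directed path to `Y`
whose only vertex in `S` is `j`. -/
noncomputable def bas {d : ℕ} (E : Vtx d → Vtx d → Prop) (S : Finset (Fin d)) :
    Finset (Fin d) :=
  S.filter fun j => ∃ p : List (Vtx d), PathTo E j p ∧ ∀ i ∈ S, some i ∈ p → i = j

open Classical in
/-- The closure `⌈S⌉` of `S`: all `j ∈ {1,…,d}` such that every directed path
from `j` to `Y` contains a vertex of `S`. -/
noncomputable def clos {d : ℕ} (E : Vtx d → Vtx d → Prop) (S : Finset (Fin d)) :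
    Finset (Fin d) :=
  Finset.univ.filter fun j => ∀ p : List (Vtx d), PathTo E j p → ∃ i ∈ S, some i ∈ p

/-- Every subset of a simple (irreducible and closed) set is irreducible and closed. -/
theorem stmt9 (d : ℕ) (E : Vtx d → Vtx d → Prop)
    (hacyc : ∀ v : Vtx d, ¬ Relation.TransGen E v v)
    (hY : ∀ v : Vtx d, ¬ E none v)
    (S : Finset (Fin d)) (h1 : bas E S = S) (h2 : clos E S = S)
    (T : Finset (Fin d)) (hT : T ⊆ S) :
    bas E T = T ∧ clos E T = T := by
  classical
  -- key: every j ∈ S has a path whose only S-vertex is j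
  have key : ∀ j ∈ S, ∃ p : List (Vtx d), PathTo E j p ∧ ∀ i ∈ S, some i ∈ p → i = j := by
    intro j hj
    rw [← h1] at hj
    exact (Finset.mem_filter.mp hj).2
  constructor
  · apply Finset.Subset.antisymm (Finset.filter_subset _ _)
    intro j hj
    obtain ⟨p, hp, honly⟩ := key j (hT hj)
    exact Finset.mem_filter.mpr ⟨hj, p, hp, fun i hi hip => honly i (hT hi) hip⟩
  · apply Finset.Subset.antisymm
    · intro j hj
      have hj' := (Finset.mem_filter.mp hj).2
      -- j ∈ clos S = S
      have hjS : j ∈ S := by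
        rw [← h2]
        exact Finset.mem_filter.mpr ⟨Finset.mem_univ _,
          fun p hp => by obtain ⟨i, hiT, hip⟩ := hj' p hp; exact ⟨i, hT hiT, hip⟩⟩
      by_contra hjT
      obtain ⟨p, hp, honly⟩ := key j hjS
      obtain ⟨i, hiT, hip⟩ := hj' p hp
      exact hjT (honly i (hT hiT) hip ▸ hiT)
    · intro j hj
      refine Finset.mem_filter.mpr ⟨Finset.mem_univ _, fun p hp => ⟨j, hj, ?_⟩⟩
      exact List.mem_of_mem_head? (by rw [hp.2.1]; rfl)
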